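/- Let (G,c) be an edge-minimal edge-colored graph. Then no triangle in G is monochromatic, i.e., for every triangle with vertex set {u,v,w} in G, the colors c({u,v}), c({v,w}), c({u,w}) are not all equal. -/
import Mathlib


open Finset

variable {V : Type*}

/-- Number of distinct colors on edges incident to `v`. -/
noncomputable def colorDeg (G : SimpleGraph V) (c : Sym2 V → ℕ) (v : V) : ℕ :=
  Set.ncard {α : ℕ | ∃ u, G.Adj u v ∧ c s(u, v) = α}

/-- Number of distinct colors `c({u,v})` over `u ∈ N(v) ∩ U`. -/
noncomputable def colorDegOn (G : SimpleGraph V) (c : Sym2 V → ℕ) (v : V) (U : Set V) : ℕ :=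
  Set.ncard {α : ℕ | ∃ u ∈ U, G.Adj u v ∧ c s(u, v) = α}

/-- Minimum color-degree `δ^c(G)`. -/
noncomputable def minColorDeg (G : SimpleGraph V) (c : Sym2 V → ℕ) : ℕ :=
  ⨅ v : V, colorDeg G c v

/-- `(G,c)` is edge-minimal: no proper spanning subgraph has the same minimum color-degree. -/
def EdgeMinimal (G : SimpleGraph V) (c : Sym2 V → ℕ) : Prop :=
  ∀ H : SimpleGraph V, H ≤ G → H ≠ G → minColorDeg H c ≠ minColorDeg G c

/-- `(G,c)` contains a rainbow cycle on `ℓ` vertices. -/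
def HasRainbowCycle (G : SimpleGraph V) (c : Sym2 V → ℕ) (ℓ : ℕ) : Prop :=
  ∃ (u : V) (p : G.Walk u u), p.IsCycle ∧ p.length = ℓ ∧ (p.edges.map c).Nodup

/-- There is a rainbow path from `v` to `y` on `k` vertices whose edge colors avoid `C`. -/
def RainbowPathAvoiding (G : SimpleGraph V) (c : Sym2 V → ℕ) (v y : V) (k : ℕ)
    (C : Set ℕ) : Prop :=
  ∃ p : G.Walk v y, p.IsPath ∧ p.length + 1 = k ∧ (p.edges.map c).Nodup ∧
    ∀ e ∈ p.edges, c e ∉ C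

/-- `σ_{v,X}(y)`: the number of colors `X`-separating `y` from `v`. -/
noncomputable def sepCount (G : SimpleGraph V) (c : Sym2 V → ℕ) (v : V) (X : Set V)
    (y : V) : ℕ :=
  Set.ncard {α : ℕ | ∃ x ∈ X, G.Adj x y ∧ c s(x, y) = α ∧ c s(v, x) ≠ α}

/-- `ρ_{v,X}(y)`: the number of colors restricted for `y` by `(v,X)`. -/
noncomputable def restrCount (G : SimpleGraph V) (c : Sym2 V → ℕ) (v : V) (X : Set V)
    (y : V) : ℕ :=
  Set.ncard {α : ℕ | (∃ x ∈ X, G.Adj x y ∧ c s(x, y) = α ∧ c s(v, x) ≠ α) ∧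
    ∀ w, G.Adj w y → w ∉ X → c s(w, y) ≠ α}

/-- The replication number `R(G,c) = max_{v,α} |N_α(v)|`. -/
noncomputable def repNum (G : SimpleGraph V) (c : Sym2 V → ℕ) : ℕ :=
  ⨆ v : V, ⨆ α : ℕ, Set.ncard {u : V | G.Adj u v ∧ c s(u, v) = α}

/-- `N_!(v)`: neighbors `u` of `v` whose color `c({u,v})` appears on exactly one edge at `v`. -/
def bangNbhd (G : SimpleGraph V) (c : Sym2 V → ℕ) (v : V) : Set V :=
  {u : V | G.Adj u v ∧ Set.ncard {w : V | G.Adj w v ∧ c s(w, v) = c s(u, v)} = 1}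

theorem stmt16 (G : SimpleGraph V) (c : Sym2 V → ℕ) (hmin : EdgeMinimal G c)
    (u v w : V) (huv : G.Adj u v) (hvw : G.Adj v w) (huw : G.Adj u w) :
    ¬ (c s(u, v) = c s(v, w) ∧ c s(v, w) = c s(u, w)) := by
  rintro ⟨h1, h2⟩
  set H := G.deleteEdges {s(u, w)} with hH
  have hle : H ≤ G := SimpleGraph.deleteEdges_le _
  have hne : H ≠ G := by
    intro h
    have h' := huw
    rw [← h] at h'
    rw [hH, SimpleGraph.deleteEdges_adj] at h'
    exact h'.2 rfl
  apply hmin H hle hne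
  unfold minColorDeg
  congr 1
  funext x
  unfold colorDeg
  congr 1
  ext α
  simp only [Set.mem_setOf_eq]
  constructor
  · rintro ⟨y, hy, rfl⟩
    rw [hH, SimpleGraph.deleteEdges_adj] at hy
    exact ⟨y, hy.1, rfl⟩
  · rintro ⟨y, hy, rfl⟩
    by_cases hc : s(y, x) = s(u, w)
    · rcases Sym2.eq_iff.mp hc with ⟨rfl, rfl⟩ | ⟨hyw, hxu⟩
      · refine ⟨v, ?_, ?_⟩
        · rw [hH, SimpleGraph.deleteEdges_adj]
          refine ⟨hvw, ?_⟩
          simp only [Set.mem_singleton_iff, Sym2.eq_iff]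
          push_neg
          constructor
          · intro hvu; exact absurd hvu huv.ne'
          · intro hvw'; exact absurd hvw' hvw.ne
        · rw [h2]
      · refine ⟨v, ?_, ?_⟩
        · rw [hxu, hH, SimpleGraph.deleteEdges_adj]
          refine ⟨huv.symm, ?_⟩
          simp [Sym2.eq_iff, huv.ne', hvw.ne]
        · rw [hxu, hyw, show s(v, u) = s(u, v) from Sym2.eq_swap, h1, h2,
            show s(u, w) = s(w, u) from Sym2.eq_swap]
    · refine ⟨y, ?_, rfl⟩
      rw [hH, SimpleGraph.deleteEdges_adj]
      exact ⟨hy, by simpa using hc⟩
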